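/- Let G_d=(V_d,E_d) be a finite simple graph with nonnegative interest scores η and nonnegative social tightness scores τ, let k ≤ |V_d|, and let G be the augmented graph obtained from G_d by adding a new node v̄ with interest score η_v̄ = ε + Σ_{v_i∈V_d}(η_i + Σ_{v_j∈V_d: e_{i,j}∈E_d} τ_{i,j}) for some ε > 0, adding an edge between v̄ and every node of V_d with social tightness score 0 in both directions. Then a k-node subset F*_d ⊆ V_d maximizes the willingness W over all k-node subsets of V_d (with no connectivity requirement) if and only if F* = F*_d ∪ {v̄} maximizes the willingness W over all (k+1)-node subsets of G that induce a connected subgraph of G. -/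

import Mathlib

open Finset

open scoped Classical in
/-- The willingness `W(F) = Σ_{v_i∈F} (η_i + Σ_{v_j∈F, e_{i,j}∈E} τ_{i,j})` of a
subset `F` of nodes of a graph `G` with interest scores `η` and social tightness
scores `τ`. -/
noncomputable def willingness {V : Type*} (G : SimpleGraph V) (η : V → ℝ)
    (τ : V → V → ℝ) (F : Finset V) : ℝ :=
  ∑ i ∈ F, (η i + ∑ j ∈ F.filter (fun j => G.Adj i j), τ i j)

/-- The graph obtained from `G` by adding a new node `v̄` (modeled as `none`)
adjacent to every node of `G` (the nodes `some v`). -/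
def augment {V : Type*} (G : SimpleGraph V) : SimpleGraph (Option V) :=
  SimpleGraph.fromRel (fun a b =>
    a = none ∨ ∃ u v, a = some u ∧ b = some v ∧ G.Adj u v)

/-- Extending the social tightness scores to the augmented graph: score `0` on
both orientations of every new edge. -/
def augTau {V : Type*} (τ : V → V → ℝ) : Option V → Option V → ℝ :=
  fun a b => match a, b with
    | some u, some v => τ u v
    | _, _ => 0


open scoped Classical in
/-- The interest score of the augmented graph: the new node `v̄` gets score
`ε + Σ_{v_i∈V_d}(η_i + Σ_{v_j : e_{i,j}∈E_d} τ_{i,j})`, all other nodes keep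
their score. -/
noncomputable def augEta {V : Type*} [Fintype V] (G : SimpleGraph V) (η : V → ℝ)
    (τ : V → V → ℝ) (ε : ℝ) : Option V → ℝ :=
  fun a => a.elim
    (ε + ∑ i, (η i + ∑ j ∈ Finset.univ.filter (fun j => G.Adj i j), τ i j)) η

section Aux

variable {V : Type*}

lemma augment_adj_none_some (G : SimpleGraph V) (v : V) :
    (augment G).Adj none (some v) := by
  rw [augment, SimpleGraph.fromRel_adj]
  exact ⟨by simp, Or.inl (Or.inl rfl)⟩

lemma augment_adj_some_none (G : SimpleGraph V) (v : V) :
    (augment G).Adj (some v) none := (augment_adj_none_some G v).symm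

lemma augment_adj_some_some (G : SimpleGraph V) (u v : V) :
    (augment G).Adj (some u) (some v) ↔ G.Adj u v := by
  rw [augment, SimpleGraph.fromRel_adj]
  constructor
  · rintro ⟨hne, h | h⟩ <;> rcases h with h | ⟨a, b, ha, hb, hab⟩ <;> simp_all
    exact hab.symm
  · intro h
    exact ⟨by simp [h.ne], Or.inl (Or.inr ⟨u, v, rfl, rfl, h⟩)⟩

lemma augTau_none_right (τ : V → V → ℝ) (a : Option V) : augTau τ a none = 0 := by
  cases a <;> rfl

lemma augTau_none_left (τ : V → V → ℝ) (a : Option V) : augTau τ none a = 0 := by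
  cases a <;> rfl

/-- Any induced subgraph of the augmented graph containing `none` is connected. -/
lemma augment_induce_connected (G : SimpleGraph V) (s : Set (Option V))
    (hs : none ∈ s) : ((augment G).induce s).Connected := by
  rw [SimpleGraph.connected_iff]
  have key : ∀ z : s, ((augment G).induce s).Reachable z ⟨none, hs⟩ := by
    rintro ⟨a, ha⟩
    cases a with
    | none => exact SimpleGraph.Reachable.refl _
    | some v =>
        exact SimpleGraph.Adj.reachable
          (show (augment G).Adj (some v) none from augment_adj_some_none G v)
  exact ⟨fun x y => (key x).trans (key y).symm, ⟨⟨none, hs⟩⟩⟩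

open scoped Classical in
lemma willingness_nonneg (G : SimpleGraph V) (η : V → ℝ) (τ : V → V → ℝ)
    (hη : ∀ v, 0 ≤ η v) (hτ : ∀ u v, G.Adj u v → 0 ≤ τ u v) (T : Finset V) :
    0 ≤ willingness G η τ T := by
  refine Finset.sum_nonneg fun i _ => add_nonneg (hη i) ?_
  refine Finset.sum_nonneg fun j hj => ?_
  exact hτ i j (Finset.mem_filter.mp hj).2

open scoped Classical in
lemma willingness_le_total [Fintype V] (G : SimpleGraph V) (η : V → ℝ)
    (τ : V → V → ℝ) (hη : ∀ v, 0 ≤ η v) (hτ : ∀ u v, G.Adj u v → 0 ≤ τ u v)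
    (T : Finset V) :
    willingness G η τ T ≤
      ∑ i, (η i + ∑ j ∈ Finset.univ.filter (fun j => G.Adj i j), τ i j) := by
  unfold willingness
  have h1 : ∀ i ∈ T,
      (η i + ∑ j ∈ T.filter (fun j => G.Adj i j), τ i j) ≤
        (η i + ∑ j ∈ Finset.univ.filter (fun j => G.Adj i j), τ i j) := by
    intro i _
    refine add_le_add_right (Finset.sum_le_sum_of_subset_of_nonneg ?_ ?_) _
    · exact Finset.filter_subset_filter _ (Finset.subset_univ T)
    · intro j hj _
      exact hτ i j (Finset.mem_filter.mp hj).2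
  refine le_trans (Finset.sum_le_sum h1) ?_
  refine Finset.sum_le_sum_of_subset_of_nonneg (Finset.subset_univ T) ?_
  intro i _ _
  refine add_nonneg (hη i) (Finset.sum_nonneg fun j hj => ?_)
  exact hτ i j (Finset.mem_filter.mp hj).2

open scoped Classical in
lemma willingness_image_some [Fintype V] [DecidableEq V] (G : SimpleGraph V) (η : V → ℝ)
    (τ : V → V → ℝ) (ε : ℝ) (T : Finset V) :
    willingness (augment G) (augEta G η τ ε) (augTau τ) (T.image some) =
      willingness G η τ T := by
  classical
  unfold willingness
  rw [Finset.sum_image (by simp)]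
  refine Finset.sum_congr rfl fun u _ => ?_
  have h1 : augEta G η τ ε (some u) = η u := rfl
  rw [h1]
  congr 1
  rw [Finset.filter_image, Finset.sum_image (by simp)]
  refine Finset.sum_congr (Finset.filter_congr fun v _ => ?_) fun v _ => rfl
  simp [augment_adj_some_some]

open scoped Classical in
lemma willingness_insert_none [Fintype V] [DecidableEq V] (G : SimpleGraph V) (η : V → ℝ)
    (τ : V → V → ℝ) (ε : ℝ) (T : Finset V) :
    willingness (augment G) (augEta G η τ ε) (augTau τ)
        (insert none (T.image some)) =
      augEta G η τ ε none + willingness G η τ T := by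
  classical
  have hnone : (none : Option V) ∉ T.image some := by simp
  rw [← willingness_image_some G η τ ε T]
  unfold willingness
  rw [Finset.sum_insert hnone]
  have hA : (∑ j ∈ (insert none (T.image some)).filter
      (fun j => (augment G).Adj none j), augTau τ none j) = 0 :=
    Finset.sum_eq_zero fun j _ => augTau_none_left τ j
  have hB : ∀ i ∈ T.image some,
      (augEta G η τ ε i + ∑ j ∈ (insert none (T.image some)).filter
          (fun j => (augment G).Adj i j), augTau τ i j) =
      (augEta G η τ ε i + ∑ j ∈ (T.image some).filter
          (fun j => (augment G).Adj i j), augTau τ i j) := by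
    intro i hi
    obtain ⟨u, -, rfl⟩ := Finset.mem_image.mp hi
    congr 1
    rw [Finset.filter_insert, if_pos (augment_adj_some_none G u),
      Finset.sum_insert (by simp), augTau_none_right]
    ring
  rw [hA, Finset.sum_congr rfl hB]
  ring

end Aux

/-- A `k`-node subset `F*_d ⊆ V_d` maximizes the willingness over all `k`-node
subsets of `V_d` (no connectivity requirement, i.e. WASO-dis) if and only if
`F* = F*_d ∪ {v̄}` maximizes the willingness over all `(k+1)`-node subsets of the
augmented graph `G` that induce a connected subgraph of `G` (i.e. WASO). -/
theorem stmt0 {V : Type*} [Fintype V] [DecidableEq V] (G : SimpleGraph V)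
    (η : V → ℝ) (τ : V → V → ℝ)
    (hη : ∀ v, 0 ≤ η v) (hτ : ∀ u v, G.Adj u v → 0 ≤ τ u v)
    (k : ℕ) (hk : k ≤ Fintype.card V) (ε : ℝ) (hε : 0 < ε)
    (Fd : Finset V) (hFd : Fd.card = k) :
    (∀ S : Finset V, S.card = k → willingness G η τ S ≤ willingness G η τ Fd) ↔
      (((augment G).induce
          (↑(insert none (Fd.image some)) : Set (Option V))).Connected ∧
        ∀ S : Finset (Option V), S.card = k + 1 →
          ((augment G).induce (↑S : Set (Option V))).Connected →
          willingness (augment G) (augEta G η τ ε) (augTau τ) S ≤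
            willingness (augment G) (augEta G η τ ε) (augTau τ)
              (insert none (Fd.image some))) := by
    classical
  have hMval : augEta G η τ ε none =
      ε + ∑ i, (η i + ∑ j ∈ Finset.univ.filter (fun j => G.Adj i j), τ i j) := rfl
  have hWFd : 0 ≤ willingness G η τ Fd := willingness_nonneg G η τ hη hτ Fd
  constructor
  · intro hopt
    refine ⟨augment_induce_connected G _ (by simp), ?_⟩
    intro S hS hconn
    rw [willingness_insert_none]
    by_cases hn : (none : Option V) ∈ S
    · set T : Finset V := S.preimage some (fun a _ b _ h => Option.some_injective V h)
        with hT
      have hTS : T.image some = S.erase none := by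
        ext a
        cases a <;> simp [hT, Finset.mem_preimage] <;> exact Finset.mem_preimage
      have hSrw : S = insert none (T.image some) := by
        rw [hTS, Finset.insert_erase hn]
      have hTcard : T.card = k := by
        have h1 : (T.image some).card = T.card :=
          Finset.card_image_of_injective T (Option.some_injective V)
        rw [hTS, Finset.card_erase_of_mem hn, hS] at h1
        omega
      rw [hSrw, willingness_insert_none]
      exact add_le_add_right (hopt T hTcard) _
    · set T : Finset V := S.preimage some (fun a _ b _ h => Option.some_injective V h)
        with hT
      have hSrw : S = T.image some := by
        ext a
        cases a with
        | none => simp [hn]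
        | some v => simp [hT, Finset.mem_preimage]; exact Finset.mem_preimage.symm
      calc willingness (augment G) (augEta G η τ ε) (augTau τ) S
          = willingness G η τ T := by rw [hSrw, willingness_image_some]
        _ ≤ ∑ i, (η i + ∑ j ∈ Finset.univ.filter (fun j => G.Adj i j), τ i j) :=
            willingness_le_total G η τ hη hτ T
        _ ≤ augEta G η τ ε none + willingness G η τ Fd := by
            rw [hMval]; linarith
  · rintro ⟨-, hopt⟩ S hS
    have hcard : (insert none (S.image some)).card = k + 1 := by
      rw [Finset.card_insert_of_notMem (by simp),
        Finset.card_image_of_injective S (Option.some_injective V), hS]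
    have h1 := hopt (insert none (S.image some)) hcard
      (augment_induce_connected G _ (by simp))
    rw [willingness_insert_none, willingness_insert_none] at h1
    linarith
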